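/- Let H be symmetric positive definite of size (N−1) solving H L̂_e + L̂_e^T H = I. For σ > sqrt(λ_max(H)/2 + 1), the matrices P = [[σH, H],[H, σH]] and Q = [[σ² I, σ³ I − σH],[σ³ I − σH, σ⁴ I − 2H]] are both symmetric positive definite. -/

import Mathlib

open Matrix

set_option linter.unusedSectionVars false
set_option maxHeartbeats 1000000

section AuxPQ

variable {n p : Type*} [Fintype n] [DecidableEq n] [Fintype p] [DecidableEq p]

private lemma posDef_smul' {A : Matrix n n ℝ} (hA : A.PosDef) {c : ℝ} (hc : 0 < c) :
    (c • A).PosDef := by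
  rw [Matrix.posDef_iff_dotProduct_mulVec]
  constructor
  · unfold Matrix.IsHermitian
    rw [conjTranspose_smul, hA.1.eq]
    simp
  · intro x hx
    have h := hA.dotProduct_mulVec_pos hx
    simp only [smul_mulVec, dotProduct_smul]
    positivity

private lemma posDef_conj' {A B : Matrix n n ℝ} (hA : A.PosDef) (h : B * Bᴴ = 1) :
    (B * A * Bᴴ).PosDef := by
  have hAt : Aᵀ = A := by have := hA.1; simpa [Matrix.IsHermitian] using this
  rw [Matrix.posDef_iff_dotProduct_mulVec]
  constructor
  · unfold Matrix.IsHermitian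
    simp [conjTranspose_mul, Matrix.mul_assoc, hAt]
  · intro x hx
    have key : star x ⬝ᵥ (B * A * Bᴴ) *ᵥ x = star (Bᴴ *ᵥ x) ⬝ᵥ A *ᵥ (Bᴴ *ᵥ x) := by
      rw [star_mulVec, ← Matrix.mulVec_mulVec, dotProduct_mulVec (star x), ← Matrix.vecMul_vecMul]
      simp [conjTranspose_conjTranspose, dotProduct_mulVec, Matrix.mul_assoc]
    rw [key]
    refine hA.dotProduct_mulVec_pos fun h0 => hx ?_
    have : B *ᵥ (Bᴴ *ᵥ x) = B *ᵥ 0 := by rw [h0]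
    rwa [Matrix.mulVec_mulVec, h, Matrix.one_mulVec, Matrix.mulVec_zero] at this

private lemma conj_diag_posDef {V : Matrix n n ℝ} (hVV : V * Vᴴ = 1) (d : n → ℝ) {c : ℝ}
    (hd : ∀ i, 0 < d i ∧ d i < c) :
    (c • (V * diagonal d * Vᴴ) - (V * diagonal d * Vᴴ) * (V * diagonal d * Vᴴ)).PosDef := by
  have hVV' : Vᴴ * V = 1 := mul_eq_one_comm.mp hVV
  have key : c • (V * diagonal d * Vᴴ) - (V * diagonal d * Vᴴ) * (V * diagonal d * Vᴴ)
      = V * diagonal (fun i => c * d i - d i * d i) * Vᴴ := by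
    have hassoc : Vᴴ * (V * (diagonal d * Vᴴ)) = diagonal d * Vᴴ := by
      rw [← Matrix.mul_assoc Vᴴ V, hVV', Matrix.one_mul]
    have hmul : (V * diagonal d * Vᴴ) * (V * diagonal d * Vᴴ)
        = V * (diagonal d * diagonal d) * Vᴴ := by
      simp only [Matrix.mul_assoc, hassoc]
    have hdiag : (diagonal fun i => c * d i - d i * d i)
        = c • diagonal d - diagonal (fun i => d i * d i) := by
      rw [← diagonal_smul, ← diagonal_sub]
      norm_num [Pi.smul_def, smul_eq_mul]
    rw [hmul, diagonal_mul_diagonal, hdiag]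
    simp [Matrix.mul_sub, Matrix.sub_mul, mul_smul_comm, smul_mul_assoc, Matrix.mul_assoc]
  rw [key]
  refine posDef_conj' ?_ hVV
  rw [Matrix.posDef_diagonal_iff]
  intro i
  obtain ⟨h1, h2⟩ := hd i
  nlinarith

private lemma smul_sub_sq_posDef {H : Matrix n n ℝ} (hH : H.PosDef) {c : ℝ}
    (hc : ∀ i, hH.1.eigenvalues i < c) : (c • H - H * H).PosDef := by
  have hVV : (hH.1.eigenvectorUnitary : Matrix n n ℝ) * (hH.1.eigenvectorUnitary : Matrix n n ℝ)ᴴ = 1 := by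
    rw [← Matrix.star_eq_conjTranspose]
    exact Matrix.mem_unitaryGroup_iff.mp (hH.1.eigenvectorUnitary).2
  have hspec : H = (hH.1.eigenvectorUnitary : Matrix n n ℝ) * diagonal hH.1.eigenvalues
      * (hH.1.eigenvectorUnitary : Matrix n n ℝ)ᴴ := by
    have := hH.1.spectral_theorem
    simpa [Matrix.star_eq_conjTranspose] using this
  rw [hspec]
  exact conj_diag_posDef hVV _ (fun i => ⟨hH.eigenvalues_pos i, hc i⟩)

private lemma posDef_fromBlocks' {A : Matrix n n ℝ} (B : Matrix n p ℝ) {D : Matrix p p ℝ}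
    (hA : A.PosDef) (hS : (D - Bᴴ * A⁻¹ * B).PosDef) :
    (fromBlocks A B Bᴴ D).PosDef := by
  haveI : Invertible A := A.invertibleOfIsUnitDet hA.det_pos.ne'.isUnit
  rw [Matrix.posDef_iff_dotProduct_mulVec]
  constructor
  · exact (Matrix.IsHermitian.fromBlocks₁₁ B D hA.1).mpr hS.1
  · intro x hx
    rw [← Sum.elim_comp_inl_inr x, dotProduct_mulVec,
      Matrix.schur_complement_eq₁₁ B D _ _ hA.1]
    by_cases hy : x ∘ Sum.inr = 0
    · have hx1 : x ∘ Sum.inl ≠ 0 := by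
        intro h1
        apply hx
        ext (i | j)
        · exact congrFun h1 i
        · exact congrFun hy j
      rw [hy]
      simp only [Matrix.mulVec_zero, add_zero, dotProduct_zero, Matrix.vecMul_zero]
      have := hA.dotProduct_mulVec_pos hx1
      rw [dotProduct_mulVec] at this
      simpa using this
    · have h1 : (0:ℝ) ≤ star (x ∘ Sum.inl + (A⁻¹ * B) *ᵥ (x ∘ Sum.inr)) ᵥ* A ⬝ᵥ
          (x ∘ Sum.inl + (A⁻¹ * B) *ᵥ (x ∘ Sum.inr)) := by
        rw [← dotProduct_mulVec]
        exact hA.posSemidef.dotProduct_mulVec_nonneg _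
      have h2 := hS.dotProduct_mulVec_pos hy
      rw [dotProduct_mulVec] at h2
      linarith

end AuxPQ

/-- Let `H` be symmetric positive definite of size `N − 1` solving the
Lyapunov equation `H L̂_e + L̂_eᵀ H = I`. For `σ > √(λ_max(H)/2 + 1)`, the matrices
`P = [[σH, H],[H, σH]]` and `Q = [[σ²I, σ³I − σH],[σ³I − σH, σ⁴I − 2H]]` are both
symmetric positive definite. -/
theorem P_and_Q_posdef
    (m : ℕ) (H Le : Matrix (Fin m) (Fin m) ℝ)
    (hHsymm : H.IsSymm) (hH : H.PosDef)
    (hLyap : H * Le + Leᵀ * H = 1)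
    (σ : ℝ) (hσ : Real.sqrt ((⨆ i, hH.1.eigenvalues i) / 2 + 1) < σ) :
    ((Matrix.fromBlocks (σ • H) H H (σ • H)).IsSymm ∧
      (Matrix.fromBlocks (σ • H) H H (σ • H)).PosDef) ∧
    ((Matrix.fromBlocks (σ ^ 2 • (1 : Matrix (Fin m) (Fin m) ℝ))
        (σ ^ 3 • (1 : Matrix (Fin m) (Fin m) ℝ) - σ • H)
        (σ ^ 3 • (1 : Matrix (Fin m) (Fin m) ℝ) - σ • H)
        (σ ^ 4 • (1 : Matrix (Fin m) (Fin m) ℝ) - (2 : ℝ) • H)).IsSymm ∧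
      (Matrix.fromBlocks (σ ^ 2 • (1 : Matrix (Fin m) (Fin m) ℝ))
        (σ ^ 3 • (1 : Matrix (Fin m) (Fin m) ℝ) - σ • H)
        (σ ^ 3 • (1 : Matrix (Fin m) (Fin m) ℝ) - σ • H)
        (σ ^ 4 • (1 : Matrix (Fin m) (Fin m) ℝ) - (2 : ℝ) • H)).PosDef) := by
  set lam : ℝ := ⨆ i, hH.1.eigenvalues i with hlamdef
  have hlam : 0 ≤ lam := by
    rcases isEmpty_or_nonempty (Fin m) with hmm | hmm
    · simp [hlamdef, ciSup_of_empty, Real.sSup_empty]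
    · exact (hH.eigenvalues_pos (Classical.arbitrary _)).le.trans
        (le_ciSup (Set.Finite.bddAbove (Set.finite_range _)) _)
  have hs : Real.sqrt (lam / 2 + 1) ^ 2 = lam / 2 + 1 :=
    Real.sq_sqrt (by linarith)
  have h1s : (1:ℝ) ≤ Real.sqrt (lam / 2 + 1) := by
    nlinarith [hs, Real.sqrt_nonneg (lam / 2 + 1), hlam]
  have hσ1 : 1 < σ := lt_of_le_of_lt h1s hσ
  have hσ0 : (0:ℝ) < σ := by linarith
  have hσne : σ ≠ 0 := ne_of_gt hσ0
  have hσ2 : lam / 2 + 1 < σ ^ 2 := by nlinarith [hσ, h1s, hs]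
  have hHc : Hᴴ = H := hH.1.eq
  have hdet : IsUnit H.det := hH.det_pos.ne'.isUnit
  have hinvH : H * H⁻¹ = 1 := Matrix.mul_nonsing_inv H hdet
  -- P part
  have hσH : (σ • H).PosDef := posDef_smul' hH hσ0
  have hinvP : (σ • H)⁻¹ = σ⁻¹ • H⁻¹ := by
    refine Matrix.inv_eq_right_inv ?_
    rw [smul_mul_assoc, mul_smul_comm, hinvH, smul_smul, mul_inv_cancel₀ hσne, one_smul]
  have hschurP : (σ • H) - Hᴴ * (σ • H)⁻¹ * H = (σ - σ⁻¹) • H := by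
    rw [hHc, hinvP, mul_smul_comm, smul_mul_assoc, hinvH, Matrix.one_mul, sub_smul]
  have hsubpos : 0 < σ - σ⁻¹ := by
    have hi : σ * σ⁻¹ = 1 := mul_inv_cancel₀ hσne
    have hip : 0 < σ⁻¹ := inv_pos.mpr hσ0
    nlinarith
  have hP : (fromBlocks (σ • H) H Hᴴ (σ • H)).PosDef :=
    posDef_fromBlocks' H hσH (by rw [hschurP]; exact posDef_smul' hH hsubpos)
  rw [hHc] at hP
  have hPsymm : (fromBlocks (σ • H) H H (σ • H)).IsSymm :=
    Matrix.IsSymm.fromBlocks (hHsymm.smul σ) hHsymm (hHsymm.smul σ)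
  refine ⟨⟨hPsymm, hP⟩, ?_⟩
  -- Q part
  have hB : (σ ^ 3 • (1 : Matrix (Fin m) (Fin m) ℝ) - σ • H)ᴴ
      = σ ^ 3 • (1 : Matrix (Fin m) (Fin m) ℝ) - σ • H := by
    simp [conjTranspose_sub, conjTranspose_smul, hHc, hHsymm.eq]
  have hQA : (σ ^ 2 • (1 : Matrix (Fin m) (Fin m) ℝ)).PosDef :=
    posDef_smul' Matrix.PosDef.one (by positivity)
  have hAinv : (σ ^ 2 • (1 : Matrix (Fin m) (Fin m) ℝ))⁻¹ = (σ ^ 2)⁻¹ • 1 := by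
    refine Matrix.inv_eq_right_inv ?_
    rw [smul_mul_assoc, Matrix.one_mul, smul_smul, mul_inv_cancel₀ (by positivity), one_smul]
  have hschurQ : (σ ^ 4 • (1 : Matrix (Fin m) (Fin m) ℝ) - (2 : ℝ) • H)
      - (σ ^ 3 • (1 : Matrix (Fin m) (Fin m) ℝ) - σ • H)ᴴ
        * (σ ^ 2 • (1 : Matrix (Fin m) (Fin m) ℝ))⁻¹
        * (σ ^ 3 • (1 : Matrix (Fin m) (Fin m) ℝ) - σ • H)
      = (2 * (σ ^ 2 - 1)) • H - H * H := by
    rw [hB, hAinv]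
    simp only [Matrix.sub_mul, Matrix.mul_sub, smul_mul_assoc, mul_smul_comm,
      Matrix.one_mul, Matrix.mul_one, smul_smul]
    match_scalars <;> field_simp <;> ring
  have hc : ∀ i, hH.1.eigenvalues i < 2 * (σ ^ 2 - 1) := by
    intro i
    have h1 : hH.1.eigenvalues i ≤ lam :=
      le_ciSup (Set.Finite.bddAbove (Set.finite_range _)) i
    linarith
  have hQ := posDef_fromBlocks' (σ ^ 3 • (1 : Matrix (Fin m) (Fin m) ℝ) - σ • H) hQA
    (by rw [hschurQ]; exact smul_sub_sq_posDef hH hc)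
  rw [hB] at hQ
  have hBsymm : (σ ^ 3 • (1 : Matrix (Fin m) (Fin m) ℝ) - σ • H).IsSymm :=
    (Matrix.isSymm_one.smul (σ ^ 3)).sub (hHsymm.smul σ)
  exact ⟨Matrix.IsSymm.fromBlocks (Matrix.isSymm_one.smul (σ ^ 2)) hBsymm
    ((Matrix.isSymm_one.smul (σ ^ 4)).sub (hHsymm.smul (2:ℝ))), hQ⟩
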